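/- Under the projector hypotheses, the 4-tensor T = ρ[((n−2)(n−3)/2)(g⊙g) + (P⊙P) − (n−3)(g⊙P)] satisfies T·T·T = ρ³[2(n−2)³(n−3)³(g⊙g) + 16(P⊙P) − 4(n−3)³(g⊙P)]. -/
import Mathlib


open Finset

variable {ι : Type*} [Fintype ι] [DecidableEq ι]

/-- Kulkarni–Nomizu product of two 2-tensors:
`(A⊙B)_{μνλκ} = A_{μλ}B_{νκ} − A_{νλ}B_{μκ} − A_{μκ}B_{νλ} + A_{νκ}B_{μλ}`. -/
def KN (A B : ι → ι → ℝ) : ι → ι → ι → ι → ℝ :=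
  fun μ ν l κ => A μ l * B ν κ - A ν l * B μ κ - A μ κ * B ν l + A ν κ * B μ l

/-- Contraction of two 2-tensors via the inverse metric:
`(A·B)_{μκ} = Σ_{ν,λ} A_{μν}(Ḡ⁻¹)_{νλ}B_{λκ}`. -/
def dot2 (Ginv : ι → ι → ℝ) (A B : ι → ι → ℝ) : ι → ι → ℝ :=
  fun μ κ => ∑ ν, ∑ l, A μ ν * Ginv ν l * B l κ

/-- Contraction of two 4-tensors via the inverse metric:
`(R·S)_{μνλκ} = Σ R_{μνστ}(Ḡ⁻¹)_{σσ'}(Ḡ⁻¹)_{ττ'}S_{σ'τ'λκ}`. -/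
def dot4 (Ginv : ι → ι → ℝ) (R S : ι → ι → ι → ι → ℝ) : ι → ι → ι → ι → ℝ :=
  fun μ ν l κ => ∑ σ, ∑ τ, ∑ σ', ∑ τ', R μ ν σ τ * Ginv σ σ' * Ginv τ τ' * S σ' τ' l κ

/-- Trace of a 2-tensor: `tr A = Σ_{μ,ν} (Ḡ⁻¹)_{μν}A_{νμ}`. -/
def tr2 (Ginv : ι → ι → ℝ) (A : ι → ι → ℝ) : ℝ :=
  ∑ μ, ∑ ν, Ginv μ ν * A ν μ

/-- Partial trace of a 4-tensor: `R_{μν}{}^ν{}_κ = Σ_{ν,ν'} (Ḡ⁻¹)_{νν'} R_{μνν'κ}`. -/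
def ptr4 (Ginv : ι → ι → ℝ) (R : ι → ι → ι → ι → ℝ) : ι → ι → ℝ :=
  fun μ κ => ∑ ν, ∑ ν', Ginv ν ν' * R μ ν ν' κ

/-- Full trace of a 4-tensor: `R_{μν}{}^{μν} = Σ (Ḡ⁻¹)_{μμ'}(Ḡ⁻¹)_{νν'} R_{μνμ'ν'}`. -/
def ftr4 (Ginv : ι → ι → ℝ) (R : ι → ι → ι → ι → ℝ) : ℝ :=
  ∑ μ, ∑ μ', ∑ ν, ∑ ν', Ginv μ μ' * Ginv ν ν' * R μ ν μ' ν'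

/-- The curvature 4-tensor of a generalized Schwarzschild–Tangherlini geometry,
`T = ρ[((n−2)(n−3)/2)(g⊙g) + (P⊙P) − (n−3)(g⊙P)]`. -/
noncomputable def Tgst (n : ℕ) (ρ : ℝ) (g P : ι → ι → ℝ) : ι → ι → ι → ι → ℝ :=
  fun μ ν l κ => ρ * (((n : ℝ) - 2) * ((n : ℝ) - 3) / 2 * KN g g μ ν l κ
    + KN P P μ ν l κ - ((n : ℝ) - 3) * KN g P μ ν l κ)

lemma quad (f h : ι → ι → ℝ) :
    (∑ σ, ∑ σ', f σ σ') * (∑ τ, ∑ τ', h τ τ') =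
    ∑ σ, ∑ τ, ∑ σ', ∑ τ', f σ σ' * h τ τ' := by
  rw [Finset.sum_mul_sum]
  exact Finset.sum_congr rfl fun σ _ => Finset.sum_congr rfl fun τ _ => Finset.sum_mul_sum _ _ _ _

lemma key4 (F : ι → ι → ι → ι → ℝ) :
    (∑ σ, ∑ τ, ∑ σ', ∑ τ', F σ τ σ' τ') = ∑ σ, ∑ τ, ∑ σ', ∑ τ', F τ σ τ' σ' := by
  rw [Finset.sum_comm]
  exact Finset.sum_congr rfl fun σ _ => Finset.sum_congr rfl fun τ _ => Finset.sum_comm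

lemma quad2 (f h : ι → ι → ℝ) :
    (∑ σ, ∑ σ', f σ σ') * (∑ τ, ∑ τ', h τ τ') =
    ∑ σ, ∑ τ, ∑ σ', ∑ τ', f τ τ' * h σ σ' := by
  rw [quad]
  exact key4 fun σ τ σ' τ' => f σ σ' * h τ τ'

lemma KN_dot2_expand (Ginv X1 X2 Y1 Y2 : ι → ι → ℝ) (μ ν l κ : ι) :
    KN (dot2 Ginv X1 Y1) (dot2 Ginv X2 Y2) μ ν l κ =
      ∑ σ, ∑ τ, ∑ σ', ∑ τ',
        ((X1 μ σ * Ginv σ σ' * Y1 σ' l) * (X2 ν τ * Ginv τ τ' * Y2 τ' κ)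
        - (X1 ν σ * Ginv σ σ' * Y1 σ' l) * (X2 μ τ * Ginv τ τ' * Y2 τ' κ)
        - (X1 μ σ * Ginv σ σ' * Y1 σ' κ) * (X2 ν τ * Ginv τ τ' * Y2 τ' l)
        + (X1 ν σ * Ginv σ σ' * Y1 σ' κ) * (X2 μ τ * Ginv τ τ' * Y2 τ' l)) := by
  simp only [KN, dot2, quad, ← Finset.sum_sub_distrib, ← Finset.sum_add_distrib]

lemma KN_dot2_expand' (Ginv X1 X2 Y1 Y2 : ι → ι → ℝ) (μ ν l κ : ι) :
    KN (dot2 Ginv X1 Y1) (dot2 Ginv X2 Y2) μ ν l κ =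
      ∑ σ, ∑ τ, ∑ σ', ∑ τ',
        ((X1 μ τ * Ginv τ τ' * Y1 τ' l) * (X2 ν σ * Ginv σ σ' * Y2 σ' κ)
        - (X1 ν τ * Ginv τ τ' * Y1 τ' l) * (X2 μ σ * Ginv σ σ' * Y2 σ' κ)
        - (X1 μ τ * Ginv τ τ' * Y1 τ' κ) * (X2 ν σ * Ginv σ σ' * Y2 σ' l)
        + (X1 ν τ * Ginv τ τ' * Y1 τ' κ) * (X2 μ σ * Ginv σ σ' * Y2 σ' l)) := by
  simp only [KN, dot2, quad2, ← Finset.sum_sub_distrib, ← Finset.sum_add_distrib]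

lemma dot4_KN (Ginv A B C D : ι → ι → ℝ) (μ ν l κ : ι) :
    dot4 Ginv (KN A B) (KN C D) μ ν l κ =
      2 * KN (dot2 Ginv A C) (dot2 Ginv B D) μ ν l κ +
      2 * KN (dot2 Ginv A D) (dot2 Ginv B C) μ ν l κ := by
  rw [two_mul, two_mul]
  nth_rewrite 1 [KN_dot2_expand Ginv A B C D μ ν l κ]
  nth_rewrite 1 [KN_dot2_expand' Ginv A B C D μ ν l κ]
  nth_rewrite 1 [KN_dot2_expand Ginv A B D C μ ν l κ]
  nth_rewrite 1 [KN_dot2_expand' Ginv A B D C μ ν l κ]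
  simp only [dot4, KN, ← Finset.sum_add_distrib]
  refine Finset.sum_congr rfl fun σ _ => Finset.sum_congr rfl fun τ _ =>
    Finset.sum_congr rfl fun σ' _ => Finset.sum_congr rfl fun τ' _ => ?_
  ring

lemma dot4_comb (Ginv : ι → ι → ℝ) (R S R1 R2 R3 S1 S2 S3 : ι → ι → ι → ι → ℝ)
    (a b c a' b' c' : ℝ)
    (hR : ∀ μ ν l κ, R μ ν l κ = a * R1 μ ν l κ + b * R2 μ ν l κ + c * R3 μ ν l κ)
    (hS : ∀ μ ν l κ, S μ ν l κ = a' * S1 μ ν l κ + b' * S2 μ ν l κ + c' * S3 μ ν l κ)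
    (μ ν l κ : ι) :
    dot4 Ginv R S μ ν l κ =
      a * a' * dot4 Ginv R1 S1 μ ν l κ + a * b' * dot4 Ginv R1 S2 μ ν l κ
      + a * c' * dot4 Ginv R1 S3 μ ν l κ
      + b * a' * dot4 Ginv R2 S1 μ ν l κ + b * b' * dot4 Ginv R2 S2 μ ν l κ
      + b * c' * dot4 Ginv R2 S3 μ ν l κ
      + c * a' * dot4 Ginv R3 S1 μ ν l κ + c * b' * dot4 Ginv R3 S2 μ ν l κ
      + c * c' * dot4 Ginv R3 S3 μ ν l κ := by
  simp only [dot4, hR, hS, Finset.mul_sum, ← Finset.sum_add_distrib]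
  refine Finset.sum_congr rfl fun σ _ => Finset.sum_congr rfl fun τ _ =>
    Finset.sum_congr rfl fun σ' _ => Finset.sum_congr rfl fun τ' _ => ?_
  ring

lemma Ginv_symm (Gbar Ginv : ι → ι → ℝ)
    (hGsymm : ∀ μ ν, Gbar μ ν = Gbar ν μ)
    (hGinv : ∀ μ l, ∑ ν, Gbar μ ν * Ginv ν l = if μ = l then (1 : ℝ) else 0) :
    ∀ μ ν, Ginv μ ν = Ginv ν μ := by
  set M : Matrix ι ι ℝ := Matrix.of Gbar with hM
  set N : Matrix ι ι ℝ := Matrix.of Ginv with hN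
  have hMN : M * N = 1 := by
    ext μ l
    simp [Matrix.mul_apply, hM, hN, hGinv μ l, Matrix.one_apply]
  have hNM : N * M = 1 := mul_eq_one_comm.mp hMN
  have hMt : M.transpose = M := by
    ext μ ν; simp [Matrix.transpose_apply, hM, hGsymm μ ν]
  have hNt : N.transpose = N := by
    calc N.transpose = N.transpose * (M * N) := by rw [hMN, mul_one]
    _ = (N.transpose * M.transpose) * N := by rw [hMt, mul_assoc]
    _ = (M * N).transpose * N := by rw [Matrix.transpose_mul]
    _ = N := by rw [hMN, Matrix.transpose_one, one_mul]
  intro μ ν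
  have := congrFun (congrFun hNt ν) μ
  simpa [Matrix.transpose_apply, hN] using this

/-- Under the projector hypotheses,
`T·T·T = ρ³[2(n−2)³(n−3)³(g⊙g) + 16(P⊙P) − 4(n−3)³(g⊙P)]`. -/
theorem Tgst_dot_Tgst_dot_Tgst {n : ℕ} (hn : 4 ≤ n) (hcard : Fintype.card ι = n)
    (Gbar Ginv g P : ι → ι → ℝ) (ρ : ℝ)
    (hGsymm : ∀ μ ν, Gbar μ ν = Gbar ν μ)
    (hGinv : ∀ μ l, ∑ ν, Gbar μ ν * Ginv ν l = if μ = l then (1 : ℝ) else 0)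
    (hsplit : ∀ μ ν, Gbar μ ν = g μ ν + P μ ν)
    (hgsymm : ∀ μ ν, g μ ν = g ν μ) (hPsymm : ∀ μ ν, P μ ν = P ν μ)
    (hgg : ∀ μ ν, dot2 Ginv g g μ ν = g μ ν)
    (hPP : ∀ μ ν, dot2 Ginv P P μ ν = P μ ν)
    (hgP : ∀ μ ν, dot2 Ginv g P μ ν = 0)
    (htrg : tr2 Ginv g = 2)
    (htrP : tr2 Ginv P = (n : ℝ) - 2)
    :
    ∀ μ ν l κ,
      dot4 Ginv (dot4 Ginv (Tgst n ρ g P) (Tgst n ρ g P)) (Tgst n ρ g P) μ ν l κ =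
        ρ ^ 3 * (2 * ((n : ℝ) - 2) ^ 3 * ((n : ℝ) - 3) ^ 3 * KN g g μ ν l κ
          + 16 * KN P P μ ν l κ - 4 * ((n : ℝ) - 3) ^ 3 * KN g P μ ν l κ) := by
  have hGi := Ginv_symm Gbar Ginv hGsymm hGinv
  set c1 : ℝ := ((n : ℝ) - 2) * ((n : ℝ) - 3) / 2 with hc1
  set c2 : ℝ := (n : ℝ) - 3 with hc2
  have hPg : ∀ μ ν, dot2 Ginv P g μ ν = 0 := by
    intro μ ν
    have : dot2 Ginv P g μ ν = dot2 Ginv g P ν μ := by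
      simp only [dot2]
      rw [Finset.sum_comm]
      exact Finset.sum_congr rfl fun τ _ => Finset.sum_congr rfl fun σ _ => by
        rw [hPsymm μ σ, hGi σ τ, hgsymm τ ν]; ring
    rw [this, hgP]
  have hT : ∀ μ ν l κ, Tgst n ρ g P μ ν l κ =
      (ρ * c1) * KN g g μ ν l κ + ρ * KN P P μ ν l κ + (-(ρ * c2)) * KN g P μ ν l κ := by
    intro μ ν l κ; simp only [Tgst, ← hc1, ← hc2]; ring
  have hTT : ∀ μ ν l κ, dot4 Ginv (Tgst n ρ g P) (Tgst n ρ g P) μ ν l κ =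
      (ρ ^ 2 * (4 * c1 ^ 2)) * KN g g μ ν l κ + (ρ ^ 2 * 4) * KN P P μ ν l κ
        + (ρ ^ 2 * (2 * c2 ^ 2)) * KN g P μ ν l κ := by
    intro μ ν l κ
    rw [dot4_comb Ginv _ _ (KN g g) (KN P P) (KN g P) (KN g g) (KN P P) (KN g P)
      (ρ * c1) ρ (-(ρ * c2)) (ρ * c1) ρ (-(ρ * c2)) hT hT]
    simp only [dot4_KN, KN, hgg, hPP, hgP, hPg]
    ring
  intro μ ν l κ
  rw [dot4_comb Ginv _ _ (KN g g) (KN P P) (KN g P) (KN g g) (KN P P) (KN g P)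
    (ρ ^ 2 * (4 * c1 ^ 2)) (ρ ^ 2 * 4) (ρ ^ 2 * (2 * c2 ^ 2))
    (ρ * c1) ρ (-(ρ * c2)) hTT hT]
  simp only [dot4_KN, KN, hgg, hPP, hgP, hPg, hc1, hc2]
  ring
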